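/- Let n ≥ 1, let k be an integer with k ≥ (n+1)/2, and let A ∈ ℂ^{n×n}. If a + ib ∈ Λ_k(A), then (t + ax + by)^{2k−n} divides the Kippenhahn polynomial f_A(t,x,y) = det(t·I_n + x·Re A + y·Im A) in ℝ[t,x,y]. -/

import Mathlib

open Matrix

noncomputable section

/-- The Hermitian real part `(A + Aᴴ)/2` of a complex matrix. -/
def ReM {n : ℕ} (A : Matrix (Fin n) (Fin n) ℂ) : Matrix (Fin n) (Fin n) ℂ :=
  (2⁻¹ : ℂ) • (A + Aᴴ)

/-- The Hermitian imaginary part `(A - Aᴴ)/(2i)` of a complex matrix. -/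
def ImM {n : ℕ} (A : Matrix (Fin n) (Fin n) ℂ) : Matrix (Fin n) (Fin n) ℂ :=
  ((2 * Complex.I)⁻¹ : ℂ) • (A - Aᴴ)

/-- The `k`-th largest eigenvalue (for `1 ≤ k ≤ n`) of a Hermitian `n × n` matrix
(with junk value `0` for non-Hermitian input): the eigenvalues sorted in increasing
order, evaluated at index `n - k`. -/
def kthEig {n : ℕ} (M : Matrix (Fin n) (Fin n) ℂ) (k : ℕ) : ℝ :=
  if hM : M.IsHermitian then
    if h : n - k < n then (hM.eigenvalues ∘ Tuple.sort hM.eigenvalues) ⟨n - k, h⟩ else 0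
  else 0

/-- `λ_k(x,y) = λ_k(x·Re A + y·Im A)`. -/
def lamXY {n : ℕ} (A : Matrix (Fin n) (Fin n) ℂ) (k : ℕ) (x y : ℝ) : ℝ :=
  kthEig ((x : ℂ) • ReM A + (y : ℂ) • ImM A) k

/-- `λ_k(θ) = λ_k(cos θ · Re A + sin θ · Im A)`. -/
def lamTheta {n : ℕ} (A : Matrix (Fin n) (Fin n) ℂ) (k : ℕ) (θ : ℝ) : ℝ :=
  lamXY A k (Real.cos θ) (Real.sin θ)

/-- The rank-`k` numerical range, via the Li–Sze halfplane description:
`Λ_k(A) = {a + ib : a cos θ + b sin θ ≤ λ_k(θ) for all θ}`. -/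
def NumRange {n : ℕ} (A : Matrix (Fin n) (Fin n) ℂ) (k : ℕ) : Set ℂ :=
  {z : ℂ | ∀ θ : ℝ, z.re * Real.cos θ + z.im * Real.sin θ ≤ lamTheta A k θ}

/-- The matrix pencil `v₀·I + v₁·Re A + v₂·Im A`. -/
def pencil {n : ℕ} (A : Matrix (Fin n) (Fin n) ℂ) (v : Fin 3 → ℝ) :
    Matrix (Fin n) (Fin n) ℂ :=
  (v 0 : ℂ) • (1 : Matrix (Fin n) (Fin n) ℂ) + (v 1 : ℂ) • ReM A + (v 2 : ℂ) • ImM A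

section Helpers
open Polynomial
lemma detL {n : ℕ} (M : Matrix (Fin n) (Fin n) ℂ) (hM : M.IsHermitian) (t u : ℝ) :
    ((t : ℂ) • (1 : Matrix (Fin n) (Fin n) ℂ) + (u : ℂ) • M).det
      = ((∏ i, (t + u * hM.eigenvalues i) : ℝ) : ℂ) := by
  set U : Matrix (Fin n) (Fin n) ℂ := (hM.eigenvectorUnitary : Matrix (Fin n) (Fin n) ℂ) with hU
  have hUU : U * star U = 1 := (Matrix.mem_unitaryGroup_iff).mp hM.eigenvectorUnitary.2
  have hUU' : star U * U = 1 := (Matrix.mem_unitaryGroup_iff').mp hM.eigenvectorUnitary.2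
  have h1 : (t : ℂ) • (1 : Matrix (Fin n) (Fin n) ℂ) + (u : ℂ) • M
      = U * ((t : ℂ) • (1 : Matrix (Fin n) (Fin n) ℂ)
          + (u : ℂ) • diagonal (RCLike.ofReal ∘ hM.eigenvalues)) * star U := by
    rw [Matrix.mul_add, Matrix.add_mul, Matrix.mul_smul, Matrix.smul_mul, mul_one, hUU,
      Matrix.mul_smul, Matrix.smul_mul]
    exact congrArg (fun X => (t : ℂ) • (1 : Matrix (Fin n) (Fin n) ℂ) + (u : ℂ) • X) hM.spectral_theorem
  rw [h1, det_mul, det_mul, mul_comm, ← mul_assoc, ← det_mul, hUU', det_one, one_mul]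
  rw [Matrix.smul_one_eq_diagonal, ← Matrix.diagonal_smul, Matrix.diagonal_add, det_diagonal]
  push_cast
  refine Finset.prod_congr rfl fun i _ => ?_
  simp [Pi.smul_apply, Function.comp]

lemma eigs_congr {n : ℕ} {M N : Matrix (Fin n) (Fin n) ℂ} (h : M = N)
    (hM : M.IsHermitian) (hN : N.IsHermitian) :
    (Finset.univ.val.map hM.eigenvalues) = (Finset.univ.val.map hN.eigenvalues) := by
  subst h; rfl

lemma eigs_smul {n : ℕ} (M : Matrix (Fin n) (Fin n) ℂ) (hM : M.IsHermitian) (r : ℝ)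
    (hr : (((r : ℂ)) • M).IsHermitian) :
    (Finset.univ.val.map hr.eigenvalues)
      = (Finset.univ.val.map (fun i => r * hM.eigenvalues i)) := by
  have key : ((Finset.univ.val.map hr.eigenvalues).map fun a => (X : ℝ[X]) - C a).prod
      = ((Finset.univ.val.map (fun i => r * hM.eigenvalues i)).map fun a => (X : ℝ[X]) - C a).prod := by
    apply Polynomial.funext
    intro s
    simp only [Polynomial.eval_multiset_prod, Multiset.map_map]
    have e1 : ∀ f : Fin n → ℝ,
        (Finset.univ.val.map (Polynomial.eval s ∘ (fun a => (X:ℝ[X]) - C a) ∘ f)).prod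
        = ∏ i, (s - f i) := by
      intro f
      rw [← Finset.prod_eq_multiset_prod]
      exact Finset.prod_congr rfl fun i _ => by simp
    rw [e1, e1]
    have h1 : (((s : ℂ)) • (1 : Matrix (Fin n) (Fin n) ℂ) + ((-1 : ℝ) : ℂ) • ((r:ℂ) • M)).det
        = ((∏ i, (s + (-1) * hr.eigenvalues i) : ℝ) : ℂ) := detL _ hr s (-1)
    have h2 : (((s : ℂ)) • (1 : Matrix (Fin n) (Fin n) ℂ) + ((-r : ℝ) : ℂ) • M).det
        = ((∏ i, (s + (-r) * hM.eigenvalues i) : ℝ) : ℂ) := detL M hM s (-r)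
    have hmm : ((-1 : ℝ) : ℂ) • ((r:ℂ) • M) = ((-r : ℝ) : ℂ) • M := by
      push_cast; rw [smul_smul]; ring_nf
    rw [hmm, h2] at h1
    have := Complex.ofReal_injective h1
    calc ∏ i, (s - hr.eigenvalues i) = ∏ i, (s + (-1) * hr.eigenvalues i) := by
          exact Finset.prod_congr rfl fun i _ => by ring
      _ = ∏ i, (s + (-r) * hM.eigenvalues i) := this.symm
      _ = ∏ i, (s - r * hM.eigenvalues i) := Finset.prod_congr rfl fun i _ => by ring
  have := congrArg Polynomial.roots key
  rwa [Polynomial.roots_multiset_prod_X_sub_C, Polynomial.roots_multiset_prod_X_sub_C] at this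

lemma countGE {n k : ℕ} (M : Matrix (Fin n) (Fin n) ℂ) (hM : M.IsHermitian)
    (hk1 : 1 ≤ k) (hkn : k ≤ n) {c : ℝ} (hc : c ≤ kthEig M k) :
    k ≤ (Finset.univ.filter (fun i => c ≤ hM.eigenvalues i)).card := by
  have hlt : n - k < n := by omega
  have hval : kthEig M k = (hM.eigenvalues ∘ Tuple.sort hM.eigenvalues) ⟨n - k, hlt⟩ := by
    rw [kthEig, dif_pos hM, dif_pos hlt]
  set σ := Tuple.sort hM.eigenvalues with hσ
  have hmono : Monotone (hM.eigenvalues ∘ σ) := Tuple.monotone_sort hM.eigenvalues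
  have key : ∀ j : Fin k, σ ⟨n - k + j.1, by omega⟩ ∈
      Finset.univ.filter (fun i => c ≤ hM.eigenvalues i) := by
    intro j
    rw [Finset.mem_filter]
    refine ⟨Finset.mem_univ _, le_trans (hc.trans (le_of_eq hval)) ?_⟩
    exact hmono (by simp [Fin.mk_le_mk])
  calc k = (Finset.univ : Finset (Fin k)).card := by simp
    _ ≤ _ := Finset.card_le_card_of_injOn (fun j => σ ⟨n - k + j.1, by omega⟩)
        (fun j _ => key j) (by
          intro j₁ _ j₂ _ h
          have := σ.injective h
          simp only [Fin.mk.injEq] at this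
          exact Fin.ext (by omega))

end Helpers

lemma hermXY {n : ℕ} (A : Matrix (Fin n) (Fin n) ℂ) (x y : ℝ) :
    ((x : ℂ) • ReM A + (y : ℂ) • ImM A).IsHermitian := by
  have hR : (ReM A).IsHermitian := by
    unfold ReM Matrix.IsHermitian
    rw [Matrix.conjTranspose_smul, Matrix.conjTranspose_add, conjTranspose_conjTranspose]
    simp [add_comm]
  have hS : (ImM A).IsHermitian := by
    unfold ImM Matrix.IsHermitian
    rw [Matrix.conjTranspose_smul, Matrix.conjTranspose_sub, conjTranspose_conjTranspose]
    have : star ((2 * Complex.I)⁻¹ : ℂ) = -(2 * Complex.I)⁻¹ := by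
      simp [Complex.ext_iff]
    rw [this, neg_smul, ← smul_neg, neg_sub]
  unfold Matrix.IsHermitian
  rw [Matrix.conjTranspose_add, Matrix.conjTranspose_smul, Matrix.conjTranspose_smul,
    hR.eq, hS.eq, Complex.star_def, Complex.conj_ofReal, Complex.conj_ofReal]

lemma card_filter_eq_count {n : ℕ} (f : Fin n → ℝ) (c : ℝ) :
    (Finset.univ.filter (fun i => f i = c)).card
      = Multiset.count c (Finset.univ.val.map f) := by
  rw [Multiset.count_map, Finset.card_def, Finset.filter_val]
  congr 1
  exact Multiset.filter_congr (fun i _ => eq_comm)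

lemma countP_eq_card_filter' {n : ℕ} (f : Fin n → ℝ) (p : ℝ → Prop) [DecidablePred p] :
    Multiset.countP p (Finset.univ.val.map f)
      = (Finset.univ.filter (fun i => p (f i))).card := by
  rw [Multiset.countP_map, Finset.card_def, Finset.filter_val]

lemma multLemma {n k : ℕ} (hn : 1 ≤ n) (hk2 : n + 1 ≤ 2 * k) (hkn : k ≤ n)
    (A : Matrix (Fin n) (Fin n) ℂ) (a b : ℝ)
    (hab : (a + b * Complex.I) ∈ NumRange A k) (x y : ℝ)
    (hH : ((x : ℂ) • ReM A + (y : ℂ) • ImM A).IsHermitian) :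
    2 * k - n ≤ (Finset.univ.filter (fun i => hH.eigenvalues i = a * x + b * y)).card := by
  classical
  have hk1 : 1 ≤ k := by omega
  have hab' : ∀ θ : ℝ, a * Real.cos θ + b * Real.sin θ
      ≤ kthEig ((Real.cos θ : ℂ) • ReM A + (Real.sin θ : ℂ) • ImM A) k := by
    intro θ
    have := hab θ
    simpa [NumRange, lamTheta, lamXY] using this
  set z : ℂ := (x : ℂ) + (y : ℂ) * Complex.I with hz
  rw [card_filter_eq_count]
  by_cases hz0 : z = 0
  · have hx0 : x = 0 := by
      have := congrArg Complex.re hz0; simpa [hz] using this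
    have hy0 : y = 0 := by
      have := congrArg Complex.im hz0; simpa [hz] using this
    subst hx0; subst hy0
    have hmat : ((0 : ℝ) : ℂ) • ReM A + ((0 : ℝ) : ℂ) • ImM A
        = (((0 : ℝ)) : ℂ) • ReM A := by push_cast; simp
    have hR : (ReM A).IsHermitian := by
      have := hermXY A 1 0; simpa using this
    have hsm : ((((0 : ℝ)) : ℂ) • ReM A).IsHermitian := hmat ▸ hH
    rw [eigs_congr hmat hH hsm, eigs_smul (ReM A) hR 0 hsm]
    have : (a * 0 + b * 0 : ℝ) = 0 := by ring
    rw [this, Multiset.count_map]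
    have : Multiset.filter (fun i => (0:ℝ) = 0 * hR.eigenvalues i) Finset.univ.val
        = Finset.univ.val := by
      rw [Multiset.filter_eq_self]; intro i _; simp
    rw [this]
    simpa using by omega
  · set r : ℝ := ‖z‖ with hr
    have hr0 : 0 < r := by
      rw [hr]; exact norm_pos_iff.mpr hz0
    set θ : ℝ := z.arg with hθ
    have hre : z.re = x := by simp [hz]
    have him : z.im = y := by simp [hz]
    have hx : x = r * Real.cos θ := by
      rw [hθ, Complex.cos_arg hz0, hre, hr]; field_simp
    have hy : y = r * Real.sin θ := by
      rw [hθ, Complex.sin_arg, him, hr]; field_simp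
    set c' : ℝ := a * Real.cos θ + b * Real.sin θ with hc'
    have hcc : a * x + b * y = r * c' := by rw [hx, hy, hc']; ring
    set Hθ := (Real.cos θ : ℂ) • ReM A + (Real.sin θ : ℂ) • ImM A with hHθdef
    have hHθ : Hθ.IsHermitian := hermXY A _ _
    have hmat : (x : ℂ) • ReM A + (y : ℂ) • ImM A = ((r : ℝ) : ℂ) • Hθ := by
      rw [hx, hy, hHθdef]; push_cast; module
    have hsm : (((r : ℝ) : ℂ) • Hθ).IsHermitian := hmat ▸ hH
    rw [eigs_congr hmat hH hsm, eigs_smul Hθ hHθ r hsm, hcc]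
    have hmm : (Finset.univ.val.map (fun i => r * hHθ.eigenvalues i))
        = (Finset.univ.val.map hHθ.eigenvalues).map (fun v => r * v) := by
      rw [Multiset.map_map]; rfl
    rw [hmm, Multiset.count_map_eq_count' _ _ (mul_right_injective₀ hr0.ne') c',
      ← card_filter_eq_count]
    -- now show 2k - n ≤ card {i | eigθ i = c'}
    have h1 : k ≤ (Finset.univ.filter (fun i => c' ≤ hHθ.eigenvalues i)).card :=
      countGE Hθ hHθ hk1 hkn (hab' θ)
    -- second inequality via θ + π
    have hmat2 : (Real.cos (θ + Real.pi) : ℂ) • ReM A + (Real.sin (θ + Real.pi) : ℂ) • ImM A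
        = ((-1 : ℝ) : ℂ) • Hθ := by
      rw [Real.cos_add_pi, Real.sin_add_pi, hHθdef]; push_cast; module
    have hsm2 : (((-1 : ℝ) : ℂ) • Hθ).IsHermitian := hmat2 ▸ hermXY A _ _
    have h2' : -c' ≤ kthEig (((-1 : ℝ) : ℂ) • Hθ) k := by
      have := hab' (θ + Real.pi)
      rw [hmat2] at this
      rw [Real.cos_add_pi, Real.sin_add_pi] at this
      calc -c' = a * -Real.cos θ + b * -Real.sin θ := by rw [hc']; ring
        _ ≤ _ := this
    have h2'' : k ≤ (Finset.univ.filter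
        (fun i => -c' ≤ hsm2.eigenvalues i)).card := countGE _ hsm2 hk1 hkn h2'
    have h2 : k ≤ (Finset.univ.filter (fun i => hHθ.eigenvalues i ≤ c')).card := by
      have e1 : (Finset.univ.filter (fun i => -c' ≤ hsm2.eigenvalues i)).card
          = Multiset.countP (fun v => -c' ≤ v) (Finset.univ.val.map hsm2.eigenvalues) := by
        rw [countP_eq_card_filter']
      have e2 : (Finset.univ.val.map hsm2.eigenvalues)
          = (Finset.univ.val.map (fun i => (-1 : ℝ) * hHθ.eigenvalues i)) :=
        eigs_smul Hθ hHθ (-1) hsm2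
      rw [e1, e2, countP_eq_card_filter'] at h2''
      refine h2''.trans (le_of_eq ?_)
      congr 1
      refine Finset.filter_congr (fun i _ => ?_)
      constructor <;> intro h <;> linarith
    -- inclusion exclusion
    set S₁ := Finset.univ.filter (fun i => c' ≤ hHθ.eigenvalues i) with hS₁
    set S₂ := Finset.univ.filter (fun i => hHθ.eigenvalues i ≤ c') with hS₂
    have hinter : S₁ ∩ S₂ = Finset.univ.filter (fun i => hHθ.eigenvalues i = c') := by
      rw [hS₁, hS₂]
      ext i
      simp [le_antisymm_iff, and_comm]
    have hie := Finset.card_union_add_card_inter S₁ S₂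
    have hle : (S₁ ∪ S₂).card ≤ n := by
      have := Finset.card_le_univ (S₁ ∪ S₂); simpa using this
    rw [hinter] at hie
    omega


open MvPolynomial in
/-- For `k ≥ (n+1)/2`, if `a + ib ∈ Λ_k(A)` then
`(t + ax + by)^{2k−n}` divides the Kippenhahn polynomial `f_A`. -/
theorem stmt17 {n k : ℕ} (hn : 1 ≤ n) (hk : (n + 1 : ℝ) / 2 ≤ (k : ℝ)) (hkn : k ≤ n)
    (A : Matrix (Fin n) (Fin n) ℂ)
    (fA : MvPolynomial (Fin 3) ℝ)
    (hfA : ∀ v : Fin 3 → ℝ, ((eval v fA : ℝ) : ℂ) = (pencil A v).det)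
    (a b : ℝ) (hab : (a + b * Complex.I) ∈ NumRange A k) :
    (X 0 + C a * X 1 + C b * X 2 : MvPolynomial (Fin 3) ℝ) ^ (2 * k - n) ∣ fA := by
  classical
  have hk2 : n + 1 ≤ 2 * k := by
    have : (n + 1 : ℝ) ≤ 2 * k := by linarith
    exact_mod_cast this
  set m := 2 * k - n with hm
  set sub : Fin 3 → MvPolynomial (Fin 3) ℝ :=
    ![X 0 - C a * X 1 - C b * X 2, X 1, X 2] with hsub
  set sub' : Fin 3 → MvPolynomial (Fin 3) ℝ :=
    ![X 0 + C a * X 1 + C b * X 2, X 1, X 2] with hsub'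
  set g : MvPolynomial (Fin 3) ℝ := bind₁ sub fA with hg
  -- Step 1: the evaluated polynomial is the eigenvalue product
  have step1 : ∀ w : Fin 2 → ℝ,
      Polynomial.map (eval w) (finSuccEquiv ℝ 2 g)
        = ∏ i : Fin n, (Polynomial.X
            + Polynomial.C ((hermXY A (w 0) (w 1)).eigenvalues i - (a * w 0 + b * w 1))) := by
    intro w
    set c : ℝ := a * w 0 + b * w 1 with hc
    set hH := hermXY A (w 0) (w 1) with hHdef
    apply Polynomial.funext
    intro t
    have e0 : Polynomial.eval t (Polynomial.map (eval w) (finSuccEquiv ℝ 2 g))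
        = eval (Fin.cons t w) g := (eval_eq_eval_mv_eval' w t g).symm
    have e1 : eval (Fin.cons t w) g = eval (fun i => eval (Fin.cons t w) (sub i)) fA :=
      eval₂Hom_bind₁ (RingHom.id ℝ) (Fin.cons t w) sub fA
    have e2 : (fun i => eval (Fin.cons t w) (sub i)) = ![t - c, w 0, w 1] := by
      have c2 : (Fin.cons t w : Fin 3 → ℝ) 2 = w 1 := rfl
      have c1 : (Fin.cons t w : Fin 3 → ℝ) 1 = w 0 := rfl
      have c0 : (Fin.cons t w : Fin 3 → ℝ) 0 = t := rfl
      funext i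
      fin_cases i <;> simp [hsub, hc, c0, c1, c2] <;> ring
    have e3 : pencil A ![t - c, w 0, w 1]
        = ((t - c : ℝ) : ℂ) • (1 : Matrix (Fin n) (Fin n) ℂ)
          + ((1 : ℝ) : ℂ) • ((w 0 : ℂ) • ReM A + (w 1 : ℂ) • ImM A) := by
      simp [pencil]
      module
    have e4 : ((eval ![t - c, w 0, w 1] fA : ℝ) : ℂ)
        = ((∏ i, ((t - c) + 1 * hH.eigenvalues i) : ℝ) : ℂ) := by
      rw [hfA, e3, detL _ hH]
    have e5 : eval ![t - c, w 0, w 1] fA = ∏ i, ((t - c) + 1 * hH.eigenvalues i) :=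
      Complex.ofReal_injective e4
    rw [e0, e1, e2, e5, Polynomial.eval_prod]
    refine Finset.prod_congr rfl fun i _ => ?_
    simp
    ring
  -- Step 2: low coefficients vanish
  have step2 : ∀ j < m, (finSuccEquiv ℝ 2 g).coeff j = 0 := by
    intro j hj
    apply MvPolynomial.funext
    intro w
    rw [map_zero]
    have : eval w ((finSuccEquiv ℝ 2 g).coeff j)
        = (Polynomial.map (eval w) (finSuccEquiv ℝ 2 g)).coeff j :=
      (Polynomial.coeff_map _ _).symm
    rw [this, step1 w]
    set c : ℝ := a * w 0 + b * w 1 with hc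
    set hH := hermXY A (w 0) (w 1) with hHdef
    set T := Finset.univ.filter (fun i => hH.eigenvalues i = c) with hT
    have hTcard : m ≤ T.card := multLemma hn hk2 hkn A a b hab (w 0) (w 1) hH
    have hdvd : (Polynomial.X : Polynomial ℝ) ^ m
        ∣ ∏ i : Fin n, (Polynomial.X + Polynomial.C (hH.eigenvalues i - c)) := by
      rw [← Finset.prod_filter_mul_prod_filter_not Finset.univ
        (fun i => hH.eigenvalues i = c)]
      have : ∏ i ∈ T, (Polynomial.X + Polynomial.C (hH.eigenvalues i - c))
          = Polynomial.X ^ T.card := by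
        rw [← Finset.prod_const]
        refine Finset.prod_congr rfl fun i hi => ?_
        rw [hT, Finset.mem_filter] at hi
        simp [hi.2]
      rw [this]
      exact Dvd.dvd.mul_right (pow_dvd_pow _ hTcard) _
    exact Polynomial.X_pow_dvd_iff.mp hdvd j hj
  -- Step 3: X 0 ^ m divides g
  have step3 : (X 0 : MvPolynomial (Fin 3) ℝ) ^ m ∣ g := by
    obtain ⟨q, hq⟩ := Polynomial.X_pow_dvd_iff.mpr step2
    refine ⟨(finSuccEquiv ℝ 2).symm q, ?_⟩
    have hX0 : (finSuccEquiv ℝ 2).symm Polynomial.X = (X 0 : MvPolynomial (Fin 3) ℝ) := by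
      rw [← finSuccEquiv_X_zero (R := ℝ) (n := 2)]
      exact (finSuccEquiv ℝ 2).symm_apply_apply _
    calc g = (finSuccEquiv ℝ 2).symm (finSuccEquiv ℝ 2 g) :=
          ((finSuccEquiv ℝ 2).symm_apply_apply g).symm
      _ = (finSuccEquiv ℝ 2).symm (Polynomial.X ^ m * q) := by rw [← hq]
      _ = X 0 ^ m * (finSuccEquiv ℝ 2).symm q := by
          rw [_root_.map_mul, map_pow, hX0]
  -- Step 4: transfer back
  have step4 : bind₁ sub' g = fA := by
    rw [hg, bind₁_bind₁]
    have : (fun i => bind₁ sub' (sub i)) = (X : Fin 3 → MvPolynomial (Fin 3) ℝ) := by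
      funext i
      fin_cases i <;>
        simp [hsub, hsub', map_sub, _root_.map_mul, algHom_C, bind₁_X_right] <;> ring
    rw [this, bind₁_X_left, AlgHom.id_apply]
  have final := map_dvd (bind₁ sub') step3
  rw [step4, map_pow, bind₁_X_right] at final
  have hsub'0 : sub' 0 = X 0 + C a * X 1 + C b * X 2 := by simp [hsub']
  rwa [hsub'0] at final

end
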